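/- Let α_1, …, α_m ∈ ℕ^n be multiindices such that α_1, …, α_μ are linearly independent and each α_j for μ < j ≤ m lies in span(α_1,…,α_μ). Let h_{μ+1},…,h_m be holomorphic functions near 0 in ℂ^n. Then, as (0 or 1,·)-forms, ⋀_{j=1}^{μ} d(x^{α_j}) ∧ ⋀_{j=μ+1}^{m} d(x^{α_j} h_j) = x^{α_{μ+1} + ⋯ + α_m} ⋀_{j=1}^{μ} d(x^{α_j}) ∧ ⋀_{j=μ+1}^{m} dh_j. In particular d(x^{α_1}) ∧ ⋯ ∧ d(x^{α_μ}) ∧ d(x^{α_j}) = 0 for each μ < j ≤ m. -/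

import Mathlib

set_option synthInstance.maxHeartbeats 1000000
set_option maxHeartbeats 1000000

open ExteriorAlgebra

variable {R M : Type*} [CommRing R] [AddCommGroup M] [Module R M]

lemma mul_list_mul_ι_eq_zero (l : List M) (P : ExteriorAlgebra R M) (u : M)
    (h : P * ι R u = 0) : P * (l.map (ι R)).prod * ι R u = 0 := by
  induction l generalizing P with
  | nil => simpa using h
  | cons v t ih =>
    have hv : P * ι R v * ι R u = 0 := by
      have hswap : ι R v * ι R u = -(ι R u * ι R v) :=
        eq_neg_of_add_eq_zero_left (ι_add_mul_swap v u)
      rw [mul_assoc, hswap, mul_neg, ← mul_assoc, h, neg_eq_zero, zero_mul]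
    rw [List.map_cons, List.prod_cons, ← mul_assoc]
    exact ih (P * ι R v) hv

lemma expansion (k : ℕ) (P : ExteriorAlgebra R M) (u w : Fin k → M) (a b : Fin k → R)
    (h : ∀ j, P * ι R (u j) = 0) :
    P * (List.ofFn fun j => ι R (a j • u j + b j • w j)).prod
      = (∏ j, b j) • (P * (List.ofFn fun j => ι R (w j)).prod) := by
  induction k generalizing P with
  | zero => simp
  | succ k ih =>
    have h0 : P * ι R (a 0 • u 0 + b 0 • w 0) = b 0 • (P * ι R (w 0)) := by
      rw [map_add, map_smul, map_smul, mul_add, mul_smul_comm, mul_smul_comm, h 0,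
        smul_zero, zero_add]
    have hP' : ∀ j : Fin k, (P * ι R (w 0)) * ι R (u j.succ) = 0 := by
      intro j
      have hswap : ι R (w 0) * ι R (u j.succ) = -(ι R (u j.succ) * ι R (w 0)) :=
        eq_neg_of_add_eq_zero_left (ι_add_mul_swap _ _)
      rw [mul_assoc, hswap, mul_neg, ← mul_assoc, h j.succ, neg_eq_zero, zero_mul]
    rw [List.ofFn_succ, List.prod_cons, ← mul_assoc, h0, smul_mul_assoc,
      ih (P * ι R (w 0)) (fun j => u j.succ) (fun j => w j.succ) _ _ hP',
      List.ofFn_succ (f := fun j => ι R (w j)), List.prod_cons, Fin.prod_univ_succ,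
      ← mul_assoc, smul_smul]

lemma dense_ne_zero (n : ℕ) : Dense {y : Fin n → ℂ | ∀ i, y i ≠ 0} := by
  intro x
  rw [Metric.mem_closure_iff]
  intro ε hε
  refine ⟨fun i => if x i = 0 then ((ε / 2 : ℝ) : ℂ) else x i, fun i => ?_, ?_⟩
  · by_cases hxi : x i = 0 <;> simp [hxi]
    positivity
  · rw [dist_pi_lt_iff hε]
    intro i
    by_cases hxi : x i = 0 <;> simp [hxi, Complex.dist_eq]
    · rw [abs_of_pos hε]; linarith
    · exact hε

noncomputable def Dmon {n : ℕ} (x : Fin n → ℂ) (β : Fin n → ℕ) : (Fin n → ℂ) →L[ℂ] ℂ :=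
  ∑ i, ((∏ j ∈ Finset.univ.erase i, x j ^ β j) * ((β i : ℂ) * x i ^ (β i - 1))) •
    (ContinuousLinearMap.proj i : (Fin n → ℂ) →L[ℂ] ℂ)

lemma hasFDerivAt_mon {n : ℕ} (x : Fin n → ℂ) (β : Fin n → ℕ) :
    HasFDerivAt (fun y : Fin n → ℂ => ∏ i, y i ^ β i) (Dmon x β) x := by
  classical
  have h := HasFDerivAt.finset_prod (u := Finset.univ) (x := x)
    (g := fun i (y : Fin n → ℂ) => y i ^ β i)
    (g' := fun i => ((β i : ℂ) * x i ^ (β i - 1)) •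
      (ContinuousLinearMap.proj i : (Fin n → ℂ) →L[ℂ] ℂ))
    (fun i _ => (hasDerivAt_pow (β i) (x i)).comp_hasFDerivAt x
      ((ContinuousLinearMap.proj i : (Fin n → ℂ) →L[ℂ] ℂ).hasFDerivAt))
  rw [Dmon]
  convert h using 2 with i
  all_goals first | rfl | rw [smul_smul]

noncomputable def cc {n : ℕ} (x : Fin n → ℂ) (β : Fin n → ℕ) (i : Fin n) : ℂ :=
  (∏ j ∈ Finset.univ.erase i, x j ^ β j) * ((β i : ℂ) * x i ^ (β i - 1))

lemma Dmon_coe {n : ℕ} (x : Fin n → ℂ) (β : Fin n → ℕ) :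
    (Dmon x β : (Fin n → ℂ) →ₗ[ℂ] ℂ)
      = ∑ i, cc x β i • (LinearMap.proj i : (Fin n → ℂ) →ₗ[ℂ] ℂ) := by
  ext y
  simp [Dmon, cc]

noncomputable def Wm {n : ℕ} (y : Fin n → ℂ) (β : Fin n → ℕ) : (Fin n → ℂ) →ₗ[ℂ] ℂ :=
  ∑ i, ((β i : ℂ) * (y i)⁻¹) • (LinearMap.proj i : (Fin n → ℂ) →ₗ[ℂ] ℂ)

lemma Dmon_good {n : ℕ} (y : Fin n → ℂ) (hy : ∀ i, y i ≠ 0) (β : Fin n → ℕ) :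
    (Dmon y β : (Fin n → ℂ) →ₗ[ℂ] ℂ) = (∏ i, y i ^ β i) • Wm y β := by
  rw [Dmon_coe, Wm, Finset.smul_sum]
  refine Finset.sum_congr rfl fun i _ => ?_
  rw [smul_smul]
  congr 1
  rw [cc]
  have hprod : (∏ j, y j ^ β j) = (∏ j ∈ Finset.univ.erase i, y j ^ β j) * y i ^ β i :=
    (Finset.prod_erase_mul _ _ (Finset.mem_univ i)).symm
  rcases Nat.eq_zero_or_pos (β i) with h0 | hpos
  · simp [h0]
  · have hpow : y i ^ (β i - 1) * y i = y i ^ β i := by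
      rw [← pow_succ, Nat.sub_add_cancel hpos]
    have hyi := hy i
    field_simp [hprod]
    rw [hprod, ← hpow]
    ring

lemma Wm_dep {n k : ℕ} (v : Fin k → Fin n → ℕ)
    (hdep : ¬ LinearIndependent ℝ (fun j => fun i => (v j i : ℝ))) (y : Fin n → ℂ) :
    ¬ LinearIndependent ℂ (fun j => Wm y (v j)) := by
  rw [Fintype.not_linearIndependent_iff] at hdep ⊢
  obtain ⟨c, hsum, i0, hi0⟩ := hdep
  refine ⟨fun j => (c j : ℂ), ?_, i0, by simpa using hi0⟩
  have hco : ∀ i : Fin n, (∑ j, c j * (v j i : ℝ)) = 0 := by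
    intro i
    have := congrFun hsum i
    simpa [Finset.sum_apply] using this
  simp only [Wm, Finset.smul_sum, smul_smul]
  rw [Finset.sum_comm]
  refine Finset.sum_eq_zero fun i _ => ?_
  have : ∑ j, (c j : ℂ) * ((v j i : ℂ) * (y i)⁻¹)
      = (∑ j, (c j : ℂ) * (v j i : ℂ)) * (y i)⁻¹ := by
    rw [Finset.sum_mul]; exact Finset.sum_congr rfl fun j _ => by ring
  rw [← Finset.sum_smul, this]
  have : (∑ j, (c j : ℂ) * (v j i : ℂ)) = 0 := by
    exact_mod_cast congrArg (Complex.ofReal) (hco i)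
  rw [this, zero_mul, zero_smul]

lemma good_point {n k : ℕ} (v : Fin k → Fin n → ℕ)
    (hdep : ¬ LinearIndependent ℝ (fun j => fun i => (v j i : ℝ)))
    (y : Fin n → ℂ) (hy : ∀ i, y i ≠ 0) :
    (ιMulti ℂ k (fun j => (Dmon y (v j) : (Fin n → ℂ) →ₗ[ℂ] ℂ))) = 0 := by
  have hfam : (fun j => (Dmon y (v j) : (Fin n → ℂ) →ₗ[ℂ] ℂ))
      = fun j => (∏ i, y i ^ v j i) • Wm y (v j) :=
    funext fun j => Dmon_good y hy (v j)
  rw [hfam]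
  have h2 : (ιMulti ℂ k (M := (Fin n → ℂ) →ₗ[ℂ] ℂ))
      (fun j => (∏ i, y i ^ v j i) • Wm y (v j))
      = (∏ j, ∏ i, y i ^ v j i) • (ιMulti ℂ k (M := (Fin n → ℂ) →ₗ[ℂ] ℂ))
        (fun j => Wm y (v j)) :=
    MultilinearMap.map_smul_univ _ _ _
  rw [h2, AlternatingMap.map_linearDependent _ _ (Wm_dep v hdep y), smul_zero]

lemma cc_continuous {n : ℕ} (β : Fin n → ℕ) (i : Fin n) :
    Continuous fun y : Fin n → ℂ => cc y β i := by
  unfold cc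
  fun_prop

lemma wedge_mon_eq_zero {n k : ℕ} (v : Fin k → Fin n → ℕ)
    (hdep : ¬ LinearIndependent ℝ (fun j => fun i => (v j i : ℝ))) (x : Fin n → ℂ) :
    (ιMulti ℂ k (fun j => (Dmon x (v j) : (Fin n → ℂ) →ₗ[ℂ] ℂ))) = 0 := by
  classical
  rw [← Module.forall_dual_apply_eq_zero_iff ℂ]
  intro φ
  set M : MultilinearMap ℂ (fun _ : Fin k => ((Fin n → ℂ) →ₗ[ℂ] ℂ)) ℂ :=
    φ.compMultilinearMap (ιMulti ℂ k).toMultilinearMap with hM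
  set g : (Fin n → ℂ) → ℂ := fun y =>
    ∑ f : Fin k → Fin n, (∏ j, cc y (v j) (f j)) *
      M (fun j => (LinearMap.proj (f j) : (Fin n → ℂ) →ₗ[ℂ] ℂ)) with hgdef
  have key : ∀ y, φ (ιMulti ℂ k (fun j => (Dmon y (v j) : (Fin n → ℂ) →ₗ[ℂ] ℂ))) = g y := by
    intro y
    have h1 : φ (ιMulti ℂ k (fun j => (Dmon y (v j) : (Fin n → ℂ) →ₗ[ℂ] ℂ)))
        = M (fun j => (Dmon y (v j) : (Fin n → ℂ) →ₗ[ℂ] ℂ)) := rfl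
    rw [h1]
    have harg : (fun j => (Dmon y (v j) : (Fin n → ℂ) →ₗ[ℂ] ℂ))
        = fun j => ∑ i, cc y (v j) i • (LinearMap.proj i : (Fin n → ℂ) →ₗ[ℂ] ℂ) :=
      funext fun j => Dmon_coe y (v j)
    rw [harg, M.map_sum]
    refine Finset.sum_congr rfl fun f _ => ?_
    rw [M.map_smul_univ, smul_eq_mul]
  have hcont : Continuous g := by
    refine continuous_finset_sum _ fun f _ => ?_
    exact (continuous_finset_prod _ fun j _ => cc_continuous (v j) (f j)).mul continuous_const
  have hzero : Set.EqOn g 0 {y : Fin n → ℂ | ∀ i, y i ≠ 0} := by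
    intro y hy
    have := good_point v hdep y hy
    simp only [Pi.zero_apply]
    rw [← key y, this, map_zero]
  have hg0 : g = 0 := Continuous.ext_on (dense_ne_zero n) hcont continuous_const hzero
  rw [key x, hg0, Pi.zero_apply]

lemma key_lemma {n m μ : ℕ} (hμ : μ ≤ m) (α : Fin m → Fin n → ℕ)
    (hind : LinearIndependent ℝ fun j : Fin μ => fun i => (α (Fin.castLE hμ j) i : ℝ))
    (x : Fin n → ℂ) (j : Fin m)
    (hsp : (fun i => (α j i : ℝ)) ∈ Submodule.span ℝ
      (Set.range fun j' : Fin μ => fun i => (α (Fin.castLE hμ j') i : ℝ))) :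
    (List.ofFn fun j' : Fin μ =>
      ι ℂ ((Dmon x (α (Fin.castLE hμ j')) : (Fin n → ℂ) →L[ℂ] ℂ) : (Fin n → ℂ) →ₗ[ℂ] ℂ)).prod *
      ι ℂ ((Dmon x (α j) : (Fin n → ℂ) →L[ℂ] ℂ) : (Fin n → ℂ) →ₗ[ℂ] ℂ) = 0 := by
  classical
  set vfam : Fin (μ + 1) → Fin n → ℕ :=
    Fin.snoc (fun j' : Fin μ => α (Fin.castLE hμ j')) (α j) with hvfam
  have hlist : (List.ofFn fun i : Fin (μ + 1) =>
      ι ℂ ((Dmon x (vfam i) : (Fin n → ℂ) →L[ℂ] ℂ) : (Fin n → ℂ) →ₗ[ℂ] ℂ)).prod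
      = (List.ofFn fun j' : Fin μ =>
        ι ℂ ((Dmon x (α (Fin.castLE hμ j')) : (Fin n → ℂ) →L[ℂ] ℂ) :
          (Fin n → ℂ) →ₗ[ℂ] ℂ)).prod *
        ι ℂ ((Dmon x (α j) : (Fin n → ℂ) →L[ℂ] ℂ) : (Fin n → ℂ) →ₗ[ℂ] ℂ) := by
    rw [List.ofFn_succ', List.concat_eq_append, List.prod_append, List.prod_cons,
      List.prod_nil, mul_one]
    congr 1
    · refine congrArg _ (congrArg _ (funext fun i => ?_))
      simp [hvfam, Fin.snoc_castSucc]
    · simp [hvfam, Fin.snoc_last]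
  rw [← hlist, ← ιMulti_apply]
  apply wedge_mon_eq_zero
  have hfuneq : (fun jj => fun i => ((vfam jj) i : ℝ))
      = Fin.snoc (fun j' : Fin μ => fun i => (α (Fin.castLE hμ j') i : ℝ))
        (fun i => (α j i : ℝ)) := by
    funext jj
    refine Fin.lastCases ?_ ?_ jj
    · simp [hvfam, Fin.snoc_last]
    · intro i; simp [hvfam, Fin.snoc_castSucc]
  rw [hfuneq, linearIndependent_fin_snoc]
  rintro ⟨-, hnot⟩
  exact hnot hsp

/-- with α_1,…,α_μ linearly independent and α_j ∈ span(α_1,…,α_μ)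
for μ < j ≤ m, and h_j holomorphic near 0, the holomorphic 1-forms (as elements
of the exterior algebra of the dual space, d f being the ℂ-Fréchet derivative)
satisfy ⋀_{j≤μ} d(x^{α_j}) ∧ ⋀_{j>μ} d(x^{α_j} h_j)
      = x^{α_{μ+1}+⋯+α_m} ⋀_{j≤μ} d(x^{α_j}) ∧ ⋀_{j>μ} dh_j,
and in particular d(x^{α_1}) ∧ ⋯ ∧ d(x^{α_μ}) ∧ d(x^{α_j}) = 0 for j > μ. -/
theorem stmt8 (n m μ : ℕ) (hμ : μ ≤ m) (α : Fin m → Fin n → ℕ)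
    (hind : LinearIndependent ℝ fun j : Fin μ => fun i => (α (Fin.castLE hμ j) i : ℝ))
    (hspan : ∀ j : Fin m, μ ≤ (j : ℕ) →
      (fun i => (α j i : ℝ)) ∈ Submodule.span ℝ
        (Set.range fun j' : Fin μ => fun i => (α (Fin.castLE hμ j') i : ℝ)))
    (U : Set (Fin n → ℂ)) (hU : IsOpen U) (h0 : (0 : Fin n → ℂ) ∈ U)
    (h : Fin m → (Fin n → ℂ) → ℂ) (hh : ∀ j, DifferentiableOn ℂ (h j) U) :
    ∀ x ∈ U,
      letI d : ((Fin n → ℂ) → ℂ) →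
          ExteriorAlgebra ℂ ((Fin n → ℂ) →ₗ[ℂ] ℂ) :=
        fun F => ι ℂ (fderiv ℂ F x : (Fin n → ℂ) →ₗ[ℂ] ℂ)
      ((List.ofFn fun j : Fin m =>
          d fun y => (∏ i, y i ^ α j i) * (if μ ≤ (j : ℕ) then h j y else 1)).prod =
        (∏ i, x i ^ (∑ j ∈ Finset.univ.filter (fun j : Fin m => μ ≤ (j : ℕ)), α j i)) •
          (List.ofFn fun j : Fin m =>
            d fun y => if μ ≤ (j : ℕ) then h j y else ∏ i, y i ^ α j i).prod) ∧
      ∀ j : Fin m, μ ≤ (j : ℕ) →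
        (List.ofFn fun j' : Fin μ =>
            d fun y => ∏ i, y i ^ α (Fin.castLE hμ j') i).prod *
          (d fun y => ∏ i, y i ^ α j i) = 0 := by
  intro x hx
  classical
  have hdmon : ∀ β : Fin n → ℕ,
      fderiv ℂ (fun y : Fin n → ℂ => ∏ i, y i ^ β i) x = Dmon x β :=
    fun β => (hasFDerivAt_mon x β).fderiv
  have hdiffh : ∀ j, DifferentiableAt ℂ (h j) x :=
    fun j => (hh j).differentiableAt (hU.mem_nhds hx)
  have key : ∀ j : Fin m, μ ≤ (j : ℕ) →
      (List.ofFn fun j' : Fin μ =>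
        ι ℂ ((Dmon x (α (Fin.castLE hμ j')) : (Fin n → ℂ) →L[ℂ] ℂ) :
          (Fin n → ℂ) →ₗ[ℂ] ℂ)).prod *
        ι ℂ ((Dmon x (α j) : (Fin n → ℂ) →L[ℂ] ℂ) : (Fin n → ℂ) →ₗ[ℂ] ℂ) = 0 :=
    fun j hj => key_lemma hμ α hind x j (hspan j hj)
  refine ⟨?_, ?_⟩
  · obtain ⟨r, rfl⟩ := Nat.exists_eq_add_of_le hμ
    have h1 : ∀ i : Fin μ, (μ ≤ ((i : ℕ))) = False :=
      fun i => eq_false (Nat.not_le.mpr i.isLt)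
    have h2 : ∀ i : Fin r, (μ ≤ μ + (i : ℕ)) = True :=
      fun i => eq_true (Nat.le_add_right _ _)
    have h3 : ∀ i : Fin r,
        fderiv ℂ (fun y => (∏ i', y i' ^ α (Fin.natAdd μ i) i') * h (Fin.natAdd μ i) y) x
          = h (Fin.natAdd μ i) x • Dmon x (α (Fin.natAdd μ i))
            + (∏ i', x i' ^ α (Fin.natAdd μ i) i') • fderiv ℂ (h (Fin.natAdd μ i)) x := by
      intro i
      rw [fderiv_fun_mul (hasFDerivAt_mon x (α (Fin.natAdd μ i))).differentiableAt (hdiffh _),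
        hdmon, add_comm]
    have hc : ∀ i : Fin μ, (Fin.castLE (Nat.le_add_right μ r) i) = Fin.castAdd r i :=
      fun _ => rfl
    simp only [List.ofFn_add, hc, List.prod_append, Fin.coe_castAdd, Fin.coe_natAdd, h1, h2,
      if_true, if_false, mul_one, hdmon, h3, ContinuousLinearMap.coe_add,
      ContinuousLinearMap.coe_smul]
    have hkey : ∀ i : Fin r,
        (List.ofFn fun j' : Fin μ =>
          ι ℂ ((Dmon x (α (Fin.castAdd r j')) : (Fin n → ℂ) →L[ℂ] ℂ) :
            (Fin n → ℂ) →ₗ[ℂ] ℂ)).prod *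
          ι ℂ ((Dmon x (α (Fin.natAdd μ i)) : (Fin n → ℂ) →L[ℂ] ℂ) :
            (Fin n → ℂ) →ₗ[ℂ] ℂ) = 0 :=
      fun i => key (Fin.natAdd μ i) (by simp)
    rw [expansion r _ (fun i => ((Dmon x (α (Fin.natAdd μ i)) : (Fin n → ℂ) →L[ℂ] ℂ) :
          (Fin n → ℂ) →ₗ[ℂ] ℂ))
        (fun i => ((fderiv ℂ (h (Fin.natAdd μ i)) x : (Fin n → ℂ) →L[ℂ] ℂ) :
          (Fin n → ℂ) →ₗ[ℂ] ℂ))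
        (fun i => h (Fin.natAdd μ i) x)
        (fun i => ∏ i', x i' ^ α (Fin.natAdd μ i) i') hkey]
    have hsum : ∀ i' : Fin n,
        (∑ j ∈ Finset.univ.filter (fun j : Fin (μ + r) => μ ≤ (j : ℕ)), α j i')
          = ∑ i : Fin r, α (Fin.natAdd μ i) i' := by
      intro i'
      rw [Finset.sum_filter, Fin.sum_univ_add]
      simp [h1, h2]
    have hS : (∏ i', x i' ^ (∑ j ∈ Finset.univ.filter
          (fun j : Fin (μ + r) => μ ≤ (j : ℕ)), α j i'))
        = ∏ i : Fin r, ∏ i', x i' ^ α (Fin.natAdd μ i) i' := by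
      simp_rw [hsum, ← Finset.prod_pow_eq_pow_sum]
      exact Finset.prod_comm
    rw [hS]
  · intro j hj
    simp only [hdmon]
    exact key j hj
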